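/- Let P = conv{v₀, v₁, v₂} ⊂ ℚ² be a Fano triangle and let (λ₀, λ₁, λ₂) ∈ ℤ³ be pairwise coprime positive integers such that λ₀v₀ + λ₁v₁ + λ₂v₂ = 0. Then Vol(P) · Vol(P*) = (λ₀ + λ₁ + λ₂)³ / (λ₀λ₁λ₂). -/

import Mathlib

open scoped Pointwise

namespace FanoPaper

abbrev NZ : Type := ℤ × ℤ
abbrev NQ : Type := ℚ × ℚ

/-- Embedding of the lattice `N = ℤ²` into `N ⊗ ℚ = ℚ²`. -/
def ι (v : NZ) : NQ := ((v.1 : ℚ), (v.2 : ℚ))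

/-- Pairing between `M = Hom(N, ℤ)` (identified with `ℤ²`) and `N`. -/
def dotZ (w v : NZ) : ℤ := w.1 * v.1 + w.2 * v.2

/-- Pairing between `M` and `N ⊗ ℚ`. -/
def dotQ (w : NZ) (x : NQ) : ℚ := (w.1 : ℚ) * x.1 + (w.2 : ℚ) * x.2

/-- The determinant `u ∧ u' = u₁u'₂ − u₂u'₁`. -/
def wedge (u v : NZ) : ℤ := u.1 * v.2 - u.2 * v.1

/-- A lattice vector is primitive if its coordinates are coprime. -/
def Primitive (v : NZ) : Prop := IsCoprime v.1 v.2

/-- A Fano polygon: the convex hull of a finite set of primitive lattice vertices,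
containing the origin in its strict interior; `verts` is exactly the vertex
(extreme point) set. -/
structure FanoPolygon where
  verts : Finset NZ
  verts_nonempty : verts.Nonempty
  verts_primitive : ∀ v ∈ verts, Primitive v
  zero_mem_interior : (0 : NQ) ∈ interior (convexHull ℚ (ι '' (verts : Set NZ)))
  verts_extreme : ∀ v ∈ verts, ι v ∉ convexHull ℚ (ι '' ((verts.erase v : Finset NZ) : Set NZ))

namespace FanoPolygon

/-- The polygon itself, as a subset of `ℚ²`. -/
def hull (P : FanoPolygon) : Set NQ := convexHull ℚ (ι '' (P.verts : Set NZ))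

/-- `h_min := min w(P)`. -/
def hMin (P : FanoPolygon) (w : NZ) : ℤ := P.verts.inf' P.verts_nonempty (dotZ w)

/-- `h_max := max w(P)`. -/
def hMax (P : FanoPolygon) (w : NZ) : ℤ := P.verts.sup' P.verts_nonempty (dotZ w)

/-- `w` is the primitive inner normal vector of an edge of `P`:
`w` is primitive and attains its minimum on `P` at (at least) two vertices. -/
def IsEdgeNormal (P : FanoPolygon) (w : NZ) : Prop :=
  Primitive w ∧ 2 ≤ (P.verts.filter (fun v => dotZ w v = P.hMin w)).card

/-- The edge of `P` with inner normal `w`, i.e. the face on which `w` is minimal. -/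
def edge (P : FanoPolygon) (w : NZ) : Set NQ :=
  {x | x ∈ P.hull ∧ dotQ w x = (P.hMin w : ℚ)}

/-- The height (local index) `r_E` of the edge with inner normal `w`. -/
def height (P : FanoPolygon) (w : NZ) : ℤ := -(P.hMin w)

/-- The width `k_E = |E ∩ N| − 1` of the edge with inner normal `w`. -/
noncomputable def width (P : FanoPolygon) (w : NZ) : ℕ :=
  {v : NZ | ι v ∈ P.edge w}.ncard - 1

/-- `w_h(P) := conv{x ∈ P ∩ N : w(x) = h}`. -/
def slice (P : FanoPolygon) (w : NZ) (h : ℤ) : Set NQ :=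
  convexHull ℚ (ι '' {v : NZ | ι v ∈ P.hull ∧ dotZ w v = h})

end FanoPolygon

/-- The factor `F = conv{0, v}`. -/
def factor (v : NZ) : Set NQ := convexHull ℚ {(0 : NQ), ι v}

/-- A (possibly empty) lattice polytope in `ℚ²`. -/
def IsLatticePolytope (S : Set NQ) : Prop :=
  ∃ T : Finset NZ, S = convexHull ℚ (ι '' (T : Set NZ))

/-- The data `{G_h}` required to mutate `P` with respect to `w` with factor `conv{0, v}`:
for each `h_min ≤ h ≤ −1`, `G_h` is a lattice polytope with
`{vertices of P at height h} ⊆ G_h + |h|·F ⊆ w_h(P)`. -/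
def MutationData (P : FanoPolygon) (w v : NZ) (G : ℤ → Set NQ) : Prop :=
  ∀ h : ℤ, P.hMin w ≤ h → h ≤ -1 →
    IsLatticePolytope (G h) ∧
    ι '' {x : NZ | x ∈ P.verts ∧ dotZ w x = h} ⊆ G h + ((|h| : ℚ) • factor v) ∧
    G h + ((|h| : ℚ) • factor v) ⊆ P.slice w h

/-- The mutated set `mut_w(P, F)`. -/
def mutSet (P : FanoPolygon) (w v : NZ) (G : ℤ → Set NQ) : Set NQ :=
  convexHull ℚ ((⋃ h ∈ Finset.Icc (P.hMin w) (-1 : ℤ), G h) ∪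
    ⋃ h ∈ Finset.Icc (0 : ℤ) (P.hMax w), (P.slice w h + ((h : ℚ) • factor v)))

/-- `Q` is the mutation of `P` with respect to `w` with factor `conv{0, v}`. -/
def IsMutationWith (P : FanoPolygon) (w v : NZ) (Q : FanoPolygon) : Prop :=
  ∃ G : ℤ → Set NQ, MutationData P w v G ∧ Q.hull = mutSet P w v G

/-- `Q` is a mutation of `P`. -/
def IsMutation (P Q : FanoPolygon) : Prop :=
  ∃ w v : NZ, P.IsEdgeNormal w ∧ Primitive v ∧ dotZ w v = 0 ∧ IsMutationWith P w v Q

/-- `GL₂(ℤ)`-equivalence of Fano polygons. -/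
def GLEquiv (P Q : FanoPolygon) : Prop :=
  ∃ f : NZ ≃ₗ[ℤ] NZ, Q.verts = P.verts.image f

/-- Mutation-equivalence: the equivalence relation generated by mutations and
`GL₂(ℤ)`-transformations. -/
def MutEquiv (P Q : FanoPolygon) : Prop :=
  Relation.EqvGen (fun A B => IsMutation A B ∨ GLEquiv A B) P Q

/-- There exists a mutation of `P` with respect to `w`: a factor and lattice polytopes
`{G_h}` satisfying the defining inclusions. -/
def AdmitsMutation (P : FanoPolygon) (w : NZ) : Prop :=
  ∃ v : NZ, Primitive v ∧ dotZ w v = 0 ∧ ∃ G : ℤ → Set NQ, MutationData P w v G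

namespace FanoPolygon

/-- The number of lattice points on the boundary of `P`. -/
noncomputable def boundaryPts (P : FanoPolygon) : ℕ :=
  {v : NZ | ι v ∈ frontier P.hull}.ncard

/-- The number of lattice points in the strict interior of `P`. -/
noncomputable def interiorPts (P : FanoPolygon) : ℕ :=
  {v : NZ | ι v ∈ interior P.hull}.ncard

/-- `P` is minimal if every mutation has at least as many boundary lattice points. -/
def Minimal (P : FanoPolygon) : Prop :=
  ∀ Q : FanoPolygon, IsMutation P Q → P.boundaryPts ≤ Q.boundaryPts

/-- Empty residual basket: `r_E ∣ k_E` for every edge `E` of `P`. -/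
def EmptyBasket (P : FanoPolygon) : Prop :=
  ∀ w : NZ, P.IsEdgeNormal w → P.height w ∣ (P.width w : ℤ)

/-- The number `n` of primitive T-cones of `P`: `n = Σ_E ⌊k_E / r_E⌋`. -/
noncomputable def tConeCount (P : FanoPolygon) : ℕ :=
  ∑ᶠ w ∈ {w : NZ | P.IsEdgeNormal w}, P.width w / (P.height w).toNat

/-- All residual singularities of `P` are of type `1/3(1,1)`: every edge `E`
satisfies `r_E ∣ k_E` or (`r_E = 3` and `k_E ≡ 1 mod 3`). -/
def ThirdBasket (P : FanoPolygon) : Prop :=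
  ∀ w : NZ, P.IsEdgeNormal w →
    P.height w ∣ (P.width w : ℤ) ∨ (P.height w = 3 ∧ P.width w % 3 = 1)

/-- The number `m` of residual singularities `1/3(1,1)`:
the number of edges `E` with `r_E = 3` and `3 ∤ k_E`. -/
noncomputable def thirdCount (P : FanoPolygon) : ℕ :=
  {w : NZ | P.IsEdgeNormal w ∧ P.height w = 3 ∧ ¬ (3 ∣ P.width w)}.ncard

/-- The number of residual lattice points of `P`:
`Σ_E ( q_E(r_E − 1)/2 + max(q_E − 1, 0) )` with `q_E = k_E mod r_E`. -/
noncomputable def residualCount (P : FanoPolygon) : ℚ :=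
  ∑ᶠ w ∈ {w : NZ | P.IsEdgeNormal w},
    (((((P.width w : ℤ) % P.height w) : ℤ) : ℚ) * ((P.height w : ℚ) - 1) / 2
      + max (((((P.width w : ℤ) % P.height w) : ℤ) : ℚ) - 1) 0)

end FanoPolygon

/-- Embedding of the lattice into `ℝ²`, used to measure volumes. -/
def ιR (v : NZ) : ℝ × ℝ := ((v.1 : ℝ), (v.2 : ℝ))

namespace FanoPolygon

/-- The polygon, realised in `ℝ²`. -/
def hullR (P : FanoPolygon) : Set (ℝ × ℝ) := convexHull ℝ (ιR '' (P.verts : Set NZ))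

/-- Normalised volume (twice the Euclidean area) of `P`. -/
noncomputable def nvol (P : FanoPolygon) : ℝ := 2 * (MeasureTheory.volume P.hullR).toReal

/-- The dual polygon `P* = {u : u(x) ≥ −1 ∀ x ∈ P}`, realised in `ℝ²`. -/
def dualR (P : FanoPolygon) : Set (ℝ × ℝ) :=
  {u : ℝ × ℝ | ∀ x ∈ P.hullR, -1 ≤ u.1 * x.1 + u.2 * x.2}

/-- Normalised volume of the dual polygon `P*`. -/
noncomputable def nvolDual (P : FanoPolygon) : ℝ := 2 * (MeasureTheory.volume P.dualR).toReal

/-- The sublattice `Λ_P ⊆ M` generated by the primitive inner normal vectors of the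
edges of `P`. -/
def normalLattice (P : FanoPolygon) : Submodule ℤ NZ :=
  Submodule.span ℤ {w : NZ | P.IsEdgeNormal w}

/-- The index `[M : Λ_P]`. -/
noncomputable def latticeIndex (P : FanoPolygon) : ℕ :=
  P.normalLattice.toAddSubgroup.index

/-- A T-edge normal: an edge normal whose edge satisfies `k_E ≥ r_E`. -/
def IsTEdgeNormal (P : FanoPolygon) (w : NZ) : Prop :=
  P.IsEdgeNormal w ∧ P.height w ≤ (P.width w : ℤ)

/-- `ws` enumerates the primitive T-cone normals of `P` with multiplicities:
each T-edge normal `w` occurs exactly `⌊k_E/r_E⌋` times, and nothing else occurs. -/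
def IsTConeEnum (P : FanoPolygon) {n : ℕ} (ws : Fin n → NZ) : Prop :=
  ∀ w : NZ,
    (P.IsTEdgeNormal w →
      (Finset.univ.filter (fun i : Fin n => ws i = w)).card = P.width w / (P.height w).toNat) ∧
    (¬ P.IsTEdgeNormal w → (Finset.univ.filter (fun i : Fin n => ws i = w)).card = 0)

end FanoPolygon

end FanoPaper



open MeasureTheory Set
open scoped Pointwise

private lemma mem_tri' {E : Type*} [AddCommGroup E] [Module ℝ E] (a b c : E)
    {x y z : ℝ} (hx : 0 ≤ x) (hy : 0 ≤ y) (hz : 0 ≤ z) (hxyz : x + y + z = 1) :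
    x • a + y • b + z • c ∈ convexHull ℝ ({a, b, c} : Set E) := by
  have h := (convex_convexHull ℝ ({a,b,c} : Set E)).sum_mem
    (t := (Finset.univ : Finset (Fin 3))) (w := ![x,y,z]) (z := ![a,b,c])
    (fun i _ => by fin_cases i <;> assumption)
    (by simp [Fin.sum_univ_three, hxyz])
    (fun i _ => by fin_cases i <;> exact subset_convexHull ℝ _ (by simp))
  simpa [Fin.sum_univ_three] using h

private lemma Tstd_eq' : convexHull ℝ ({((0:ℝ),(0:ℝ)), (1,0), (0,1)} : Set (ℝ×ℝ)) =
    {p : ℝ × ℝ | 0 ≤ p.1 ∧ 0 ≤ p.2 ∧ p.1 + p.2 ≤ 1} := by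
  apply Subset.antisymm
  · apply convexHull_min
    · rintro p hp
      simp only [Set.mem_insert_iff, Set.mem_singleton_iff] at hp
      rcases hp with rfl | rfl | rfl <;> norm_num
    · have h1 : Convex ℝ {p : ℝ×ℝ | 0 ≤ p.1} :=
        convex_halfSpace_ge ⟨fun _ _ => rfl, fun _ _ => rfl⟩ 0
      have h2 : Convex ℝ {p : ℝ×ℝ | 0 ≤ p.2} :=
        convex_halfSpace_ge ⟨fun _ _ => rfl, fun _ _ => rfl⟩ 0
      have h3 : Convex ℝ {p : ℝ×ℝ | p.1 + p.2 ≤ 1} :=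
        convex_halfSpace_le ⟨fun p q => by simp [add_add_add_comm],
          fun c p => by simp [smul_eq_mul, mul_add]⟩ 1
      have he : {p : ℝ × ℝ | 0 ≤ p.1 ∧ 0 ≤ p.2 ∧ p.1 + p.2 ≤ 1} =
          {p : ℝ×ℝ | 0 ≤ p.1} ∩ ({p : ℝ×ℝ | 0 ≤ p.2} ∩ {p : ℝ×ℝ | p.1 + p.2 ≤ 1}) := rfl
      rw [he]
      exact h1.inter (h2.inter h3)
  · rintro ⟨px, py⟩ ⟨h1, h2, h3⟩
    have hm := mem_tri' ((0,0) : ℝ×ℝ) ((1,0) : ℝ×ℝ) ((0,1) : ℝ×ℝ)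
      (x := 1 - px - py) (y := px) (z := py) (by linarith) h1 h2 (by ring)
    simpa [Prod.ext_iff] using hm

private lemma volume_Tstd' : volume {p : ℝ × ℝ | 0 ≤ p.1 ∧ 0 ≤ p.2 ∧ p.1 + p.2 ≤ 1}
    = ENNReal.ofReal (1/2) := by
  have hmeas : MeasurableSet {p : ℝ × ℝ | 0 ≤ p.1 ∧ 0 ≤ p.2 ∧ p.1 + p.2 ≤ 1} := by
    refine (measurableSet_le measurable_const measurable_fst).inter
      ((measurableSet_le measurable_const measurable_snd).inter
        (measurableSet_le (measurable_fst.add measurable_snd) measurable_const))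
  rw [MeasureTheory.Measure.volume_eq_prod, Measure.prod_apply hmeas]
  have hslice : ∀ x : ℝ, volume (Prod.mk x ⁻¹' {p : ℝ × ℝ | 0 ≤ p.1 ∧ 0 ≤ p.2 ∧ p.1 + p.2 ≤ 1})
      = (Icc (0:ℝ) 1).indicator (fun x => ENNReal.ofReal (1 - x)) x := by
    intro x
    rcases le_or_gt 0 x with hx | hx
    · have hpre : Prod.mk x ⁻¹' {p : ℝ × ℝ | 0 ≤ p.1 ∧ 0 ≤ p.2 ∧ p.1 + p.2 ≤ 1}
          = Icc 0 (1 - x) := by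
        ext y
        simp only [mem_preimage, mem_setOf_eq, mem_Icc]
        constructor
        · rintro ⟨-, h2, h3⟩; exact ⟨h2, by linarith⟩
        · rintro ⟨h2, h3⟩; exact ⟨hx, h2, by linarith⟩
      rw [hpre, Real.volume_Icc]
      rcases le_or_gt x 1 with h1 | h1
      · rw [indicator_of_mem (mem_Icc.mpr ⟨hx, h1⟩)]; norm_num
      · rw [indicator_of_notMem (by simp only [mem_Icc, not_and]; intro; linarith)]
        rw [ENNReal.ofReal_eq_zero]; linarith
    · have hpre : Prod.mk x ⁻¹' {p : ℝ × ℝ | 0 ≤ p.1 ∧ 0 ≤ p.2 ∧ p.1 + p.2 ≤ 1} = ∅ := by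
        ext y; simp only [mem_preimage, mem_setOf_eq, mem_empty_iff_false, iff_false]
        rintro ⟨h1, -, -⟩; linarith
      rw [hpre, measure_empty,
        indicator_of_notMem (by simp only [mem_Icc, not_and]; intro; linarith)]
  simp_rw [hslice]
  rw [lintegral_indicator measurableSet_Icc]
  rw [← ofReal_integral_eq_lintegral_ofReal]
  · congr 1
    rw [integral_Icc_eq_integral_Ioc, ← intervalIntegral.integral_of_le (by norm_num : (0:ℝ) ≤ 1)]
    rw [intervalIntegral.integral_sub intervalIntegrable_const
      intervalIntegral.intervalIntegrable_id]
    simp [integral_id]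
    norm_num
  · exact (continuous_const.sub continuous_id).integrableOn_Icc
  · filter_upwards [ae_restrict_mem measurableSet_Icc] with x hx
    simp only [Pi.zero_apply]; linarith [hx.2]

private lemma volume_triangle' (a b c : ℝ × ℝ) :
    volume (convexHull ℝ ({a, b, c} : Set (ℝ × ℝ))) =
      ENNReal.ofReal (|(b.1 - a.1) * (c.2 - a.2) - (b.2 - a.2) * (c.1 - a.1)| / 2) := by
  set L : (ℝ×ℝ) →ₗ[ℝ] (ℝ×ℝ) :=
    (LinearMap.fst ℝ ℝ ℝ).smulRight (b - a) + (LinearMap.snd ℝ ℝ ℝ).smulRight (c - a) with hL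
  have hdet : LinearMap.det L = (b.1 - a.1) * (c.2 - a.2) - (b.2 - a.2) * (c.1 - a.1) := by
    rw [← LinearMap.det_toMatrix (Module.Basis.finTwoProd ℝ), Matrix.det_fin_two]
    simp [LinearMap.toMatrix_apply, hL]
    ring
  have himg : convexHull ℝ ({a, b, c} : Set (ℝ × ℝ)) =
      a +ᵥ (L '' (convexHull ℝ ({((0:ℝ),(0:ℝ)), (1,0), (0,1)} : Set (ℝ×ℝ)))) := by
    rw [L.image_convexHull, ← convexHull_vadd]
    congr 1
    rw [Set.image_insert_eq, Set.image_insert_eq, Set.image_singleton]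
    have h0 : L (0, 0) = 0 := by simp [hL]
    have h1 : L (1, 0) = b - a := by simp [hL]
    have h2 : L (0, 1) = c - a := by simp [hL]
    rw [h0, h1, h2]
    rw [show (a +ᵥ ({0, b - a, c - a} : Set (ℝ×ℝ))) = (a +ᵥ ·) '' {0, b - a, c - a} from
      (Set.image_vadd).symm]
    rw [Set.image_insert_eq, Set.image_insert_eq, Set.image_singleton]
    simp [vadd_eq_add]
  rw [himg, measure_vadd, Measure.addHaar_image_linearMap, hdet, Tstd_eq', volume_Tstd',
    ← ENNReal.ofReal_mul (abs_nonneg _)]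
  congr 1; ring

private lemma primitive_parallel' {u v : ℤ × ℤ} (hu : IsCoprime u.1 u.2) (hv : IsCoprime v.1 v.2)
    (h : u.1 * v.2 - u.2 * v.1 = 0) : v = u ∨ v = -u := by
  obtain ⟨x, y, hxy⟩ := hu
  set t := x * v.1 + y * v.2 with ht
  have h1 : v.1 = t * u.1 := by linear_combination (-v.1) * hxy - y * h
  have h2 : v.2 = t * u.2 := by linear_combination (-v.2) * hxy + x * h
  have hunit : IsUnit t := hv.isUnit_of_dvd' ⟨u.1, h1⟩ ⟨u.2, h2⟩
  rcases Int.isUnit_iff.mp hunit with h' | h'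
  · left; rw [Prod.ext_iff]; rw [h'] at h1 h2; simp [h1, h2]
  · right; rw [Prod.ext_iff]; rw [h'] at h1 h2; simp [h1, h2]

set_option maxHeartbeats 1600000 in
open FanoPaper in
/-- For a Fano triangle with pairwise coprime positive weights `(λ₀, λ₁, λ₂)`,
`Vol(P) · Vol(P*) = (λ₀ + λ₁ + λ₂)³ / (λ₀λ₁λ₂)`. -/
theorem vol_mul_dual_vol_of_fano_triangle (P : FanoPolygon) (v0 v1 v2 : NZ)
    (hV : P.verts = {v0, v1, v2}) (hcard : P.verts.card = 3)
    (l0 l1 l2 : ℤ) (h0 : 0 < l0) (h1 : 0 < l1) (h2 : 0 < l2)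
    (hc01 : IsCoprime l0 l1) (hc02 : IsCoprime l0 l2) (hc12 : IsCoprime l1 l2)
    (hsum : l0 • v0 + l1 • v1 + l2 • v2 = 0) :
    P.nvol * P.nvolDual = ((l0 : ℝ) + l1 + l2) ^ 3 / ((l0 : ℝ) * l1 * l2) := by
  classical
  have hl0R : (0:ℝ) < (l0:ℝ) := by exact_mod_cast h0
  have hl1R : (0:ℝ) < (l1:ℝ) := by exact_mod_cast h1
  have hl2R : (0:ℝ) < (l2:ℝ) := by exact_mod_cast h2
  -- distinctness of the vertices
  have hne01 : v0 ≠ v1 := by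
    rintro rfl
    have hsub : P.verts ⊆ {v0, v2} := by
      rw [hV]; intro x hx; simp only [Finset.mem_insert, Finset.mem_singleton] at hx ⊢; tauto
    have hle := Finset.card_le_card hsub
    have h2' : ({v0, v2} : Finset NZ).card ≤ 2 :=
      (Finset.card_insert_le _ _).trans (by simp)
    omega
  have hne02 : v0 ≠ v2 := by
    rintro rfl
    have hsub : P.verts ⊆ {v0, v1} := by
      rw [hV]; intro x hx; simp only [Finset.mem_insert, Finset.mem_singleton] at hx ⊢; tauto
    have hle := Finset.card_le_card hsub
    have h2' : ({v0, v1} : Finset NZ).card ≤ 2 :=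
      (Finset.card_insert_le _ _).trans (by simp)
    omega
  have hne12 : v1 ≠ v2 := by
    rintro rfl
    have hsub : P.verts ⊆ {v0, v1} := by
      rw [hV]; intro x hx; simp only [Finset.mem_insert, Finset.mem_singleton] at hx ⊢; tauto
    have hle := Finset.card_le_card hsub
    have h2' : ({v0, v1} : Finset NZ).card ≤ 2 :=
      (Finset.card_insert_le _ _).trans (by simp)
    omega
  -- primitivity
  have hp0 : IsCoprime v0.1 v0.2 := P.verts_primitive v0 (by rw [hV]; simp)
  have hp1 : IsCoprime v1.1 v1.2 := P.verts_primitive v1 (by rw [hV]; simp)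
  have hp2 : IsCoprime v2.1 v2.2 := P.verts_primitive v2 (by rw [hV]; simp)
  -- coordinates of the relation
  have e1 : l0 * v0.1 + l1 * v1.1 + l2 * v2.1 = 0 := by
    have h := congrArg Prod.fst hsum
    simpa [Prod.smul_fst, smul_eq_mul] using h
  have e2 : l0 * v0.2 + l1 * v1.2 + l2 * v2.2 = 0 := by
    have h := congrArg Prod.snd hsum
    simpa [Prod.smul_snd, smul_eq_mul] using h
  -- wedge identities
  have hA : l0 * (v0.1 * v1.2 - v0.2 * v1.1) = l2 * (v1.1 * v2.2 - v1.2 * v2.1) := by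
    linear_combination v1.2 * e1 - v1.1 * e2
  have hB : l0 * (v2.1 * v0.2 - v2.2 * v0.1) = l1 * (v1.1 * v2.2 - v1.2 * v2.1) := by
    linear_combination (-v2.2) * e1 + v2.1 * e2
  obtain ⟨k, hk⟩ : l0 ∣ (v1.1 * v2.2 - v1.2 * v2.1) :=
    hc02.dvd_of_dvd_mul_left ⟨v0.1 * v1.2 - v0.2 * v1.1, hA.symm⟩
  have hk01 : v0.1 * v1.2 - v0.2 * v1.1 = l2 * k :=
    mul_left_cancel₀ h0.ne' (by linear_combination hA + l2 * hk)
  have hk20 : v2.1 * v0.2 - v2.2 * v0.1 = l1 * k :=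
    mul_left_cancel₀ h0.ne' (by linear_combination hB + l1 * hk)
  -- k ≠ 0
  have hkne : k ≠ 0 := by
    rintro rfl
    have hw01 : v0.1 * v1.2 - v0.2 * v1.1 = 0 := by linarith [hk01]
    have hw12 : v1.1 * v2.2 - v1.2 * v2.1 = 0 := by linarith [hk]
    rcases primitive_parallel' hp0 hp1 hw01 with h' | h'
    · exact hne01 h'.symm
    rcases primitive_parallel' hp1 hp2 hw12 with h'' | h''
    · exact hne12 h''.symm
    apply hne02
    rw [h'', h', neg_neg]
  -- real versions
  have hkR : ((k:ℝ)) ≠ 0 := Int.cast_ne_zero.mpr hkne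
  have R12 : (v1.1:ℝ) * (v2.2:ℝ) - (v1.2:ℝ) * (v2.1:ℝ) = (l0:ℝ) * (k:ℝ) := by
    exact_mod_cast congrArg (Int.cast : ℤ → ℝ) hk
  have R01 : (v0.1:ℝ) * (v1.2:ℝ) - (v0.2:ℝ) * (v1.1:ℝ) = (l2:ℝ) * (k:ℝ) := by
    exact_mod_cast congrArg (Int.cast : ℤ → ℝ) hk01
  have R20 : (v2.1:ℝ) * (v0.2:ℝ) - (v2.2:ℝ) * (v0.1:ℝ) = (l1:ℝ) * (k:ℝ) := by
    exact_mod_cast congrArg (Int.cast : ℤ → ℝ) hk20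
  have Re1 : (l0:ℝ) * (v0.1:ℝ) + (l1:ℝ) * (v1.1:ℝ) + (l2:ℝ) * (v2.1:ℝ) = 0 := by
    exact_mod_cast congrArg (Int.cast : ℤ → ℝ) e1
  have Re2 : (l0:ℝ) * (v0.2:ℝ) + (l1:ℝ) * (v1.2:ℝ) + (l2:ℝ) * (v2.2:ℝ) = 0 := by
    exact_mod_cast congrArg (Int.cast : ℤ → ℝ) e2
  -- the hull over ℝ
  have hhull : P.hullR = convexHull ℝ ({ιR v0, ιR v1, ιR v2} : Set (ℝ×ℝ)) := by
    rw [FanoPolygon.hullR, hV]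
    congr 1
    simp [Set.image_insert_eq]
  -- the normalised volume of P
  have hD : P.nvol = |(k:ℝ)| * ((l0:ℝ) + l1 + l2) := by
    rw [FanoPolygon.nvol, hhull, volume_triangle', ENNReal.toReal_ofReal (by positivity)]
    have hdd : ((ιR v1).1 - (ιR v0).1) * ((ιR v2).2 - (ιR v0).2)
        - ((ιR v1).2 - (ιR v0).2) * ((ιR v2).1 - (ιR v0).1)
        = (k:ℝ) * ((l0:ℝ) + l1 + l2) := by
      simp only [ιR]
      linear_combination R01 + R12 + R20
    have hLpos : (0:ℝ) < (l0:ℝ) + l1 + l2 := by positivity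
    rw [hdd, abs_mul, abs_of_pos hLpos]
    ring
  -- dual vertices
  set kR : ℝ := ((k:ℤ):ℝ) with hkRdef
  set u0 : ℝ×ℝ := ((((v1.2:ℤ):ℝ) - ((v2.2:ℤ):ℝ)) / (kR * l0),
    ((((v2.1:ℤ):ℝ) - ((v1.1:ℤ):ℝ)) / (kR * l0))) with hu0
  set u1 : ℝ×ℝ := ((((v2.2:ℤ):ℝ) - ((v0.2:ℤ):ℝ)) / (kR * l1),
    ((((v0.1:ℤ):ℝ) - ((v2.1:ℤ):ℝ)) / (kR * l1))) with hu1
  set u2 : ℝ×ℝ := ((((v0.2:ℤ):ℝ) - ((v1.2:ℤ):ℝ)) / (kR * l2),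
    ((((v1.1:ℤ):ℝ) - ((v0.1:ℤ):ℝ)) / (kR * l2))) with hu2
  have hl0ne : ((l0:ℤ):ℝ) ≠ 0 := hl0R.ne'
  have hl1ne : ((l1:ℤ):ℝ) ≠ 0 := hl1R.ne'
  have hl2ne : ((l2:ℤ):ℝ) ≠ 0 := hl2R.ne'
  -- the nine pairing values
  have d00 : u0.1 * ((v0.1:ℤ):ℝ) + u0.2 * ((v0.2:ℤ):ℝ) = (((l1:ℤ):ℝ) + ((l2:ℤ):ℝ)) / ((l0:ℤ):ℝ) := by
    rw [hu0]; field_simp; linear_combination R01 + R20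
  have d01 : u0.1 * ((v1.1:ℤ):ℝ) + u0.2 * ((v1.2:ℤ):ℝ) = -1 := by
    rw [hu0]; field_simp; linear_combination -R12
  have d02 : u0.1 * ((v2.1:ℤ):ℝ) + u0.2 * ((v2.2:ℤ):ℝ) = -1 := by
    rw [hu0]; field_simp; linear_combination -R12
  have d10 : u1.1 * ((v0.1:ℤ):ℝ) + u1.2 * ((v0.2:ℤ):ℝ) = -1 := by
    rw [hu1]; field_simp; linear_combination -R20
  have d11 : u1.1 * ((v1.1:ℤ):ℝ) + u1.2 * ((v1.2:ℤ):ℝ) = (((l0:ℤ):ℝ) + ((l2:ℤ):ℝ)) / ((l1:ℤ):ℝ) := by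
    rw [hu1]; field_simp; linear_combination R01 + R12
  have d12 : u1.1 * ((v2.1:ℤ):ℝ) + u1.2 * ((v2.2:ℤ):ℝ) = -1 := by
    rw [hu1]; field_simp; linear_combination -R20
  have d20 : u2.1 * ((v0.1:ℤ):ℝ) + u2.2 * ((v0.2:ℤ):ℝ) = -1 := by
    rw [hu2]; field_simp; linear_combination -R01
  have d21 : u2.1 * ((v1.1:ℤ):ℝ) + u2.2 * ((v1.2:ℤ):ℝ) = -1 := by
    rw [hu2]; field_simp; linear_combination -R01
  have d22 : u2.1 * ((v2.1:ℤ):ℝ) + u2.2 * ((v2.2:ℤ):ℝ) = (((l0:ℤ):ℝ) + ((l1:ℤ):ℝ)) / ((l2:ℤ):ℝ) := by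
    rw [hu2]; field_simp; linear_combination R12 + R20
  -- membership criterion for the dual
  have hmemhalf : ∀ w : ℝ×ℝ, (-1 ≤ w.1 * ((v0.1:ℤ):ℝ) + w.2 * ((v0.2:ℤ):ℝ)) →
      (-1 ≤ w.1 * ((v1.1:ℤ):ℝ) + w.2 * ((v1.2:ℤ):ℝ)) →
      (-1 ≤ w.1 * ((v2.1:ℤ):ℝ) + w.2 * ((v2.2:ℤ):ℝ)) → w ∈ P.dualR := by
    intro w hw0 hw1 hw2 x hx
    rw [hhull] at hx
    have hsub : convexHull ℝ ({ιR v0, ιR v1, ιR v2} : Set (ℝ×ℝ)) ⊆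
        {x : ℝ×ℝ | -1 ≤ w.1 * x.1 + w.2 * x.2} := by
      apply convexHull_min
      · rintro y hy
        simp only [Set.mem_insert_iff, Set.mem_singleton_iff] at hy
        rcases hy with rfl | rfl | rfl <;> simpa [ιR]
      · exact convex_halfSpace_ge
          ⟨fun p q => by simp only [Prod.fst_add, Prod.snd_add]; ring,
           fun c p => by simp only [Prod.smul_fst, Prod.smul_snd, smul_eq_mul]; ring⟩ (-1)
    exact hsub hx
  have hu0mem : u0 ∈ P.dualR := by
    refine hmemhalf u0 ?_ d01.ge d02.ge
    rw [d00]
    have hnn : (0:ℝ) ≤ (((l1:ℤ):ℝ) + ((l2:ℤ):ℝ)) / ((l0:ℤ):ℝ) := by positivity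
    linarith
  have hu1mem : u1 ∈ P.dualR := by
    refine hmemhalf u1 d10.ge ?_ d12.ge
    rw [d11]
    have hnn : (0:ℝ) ≤ (((l0:ℤ):ℝ) + ((l2:ℤ):ℝ)) / ((l1:ℤ):ℝ) := by positivity
    linarith
  have hu2mem : u2 ∈ P.dualR := by
    refine hmemhalf u2 d20.ge d21.ge ?_
    rw [d22]
    have hnn : (0:ℝ) ≤ (((l0:ℤ):ℝ) + ((l1:ℤ):ℝ)) / ((l2:ℤ):ℝ) := by positivity
    linarith
  -- convexity of the dual
  have hconvD : Convex ℝ P.dualR := by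
    have hre : P.dualR = ⋂ x ∈ P.hullR, {u : ℝ×ℝ | -1 ≤ u.1 * x.1 + u.2 * x.2} := by
      ext u; simp [FanoPolygon.dualR]
    rw [hre]
    refine convex_iInter₂ fun x _ => convex_halfSpace_ge
      ⟨fun p q => by simp only [Prod.fst_add, Prod.snd_add]; ring,
       fun c p => by simp only [Prod.smul_fst, Prod.smul_snd, smul_eq_mul]; ring⟩ (-1)
  -- the dual is the triangle on u0, u1, u2
  have hdual : P.dualR = convexHull ℝ ({u0, u1, u2} : Set (ℝ×ℝ)) := by
    apply Subset.antisymm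
    · intro u hu
      have hw0 := hu (ιR v0) (by rw [hhull]; exact subset_convexHull ℝ _ (by simp))
      have hw1 := hu (ιR v1) (by rw [hhull]; exact subset_convexHull ℝ _ (by simp))
      have hw2 := hu (ιR v2) (by rw [hhull]; exact subset_convexHull ℝ _ (by simp))
      simp only [ιR] at hw0 hw1 hw2
      have hLpos : (0:ℝ) < ((l0:ℤ):ℝ) + ((l1:ℤ):ℝ) + ((l2:ℤ):ℝ) := by positivity
      set Λ : ℝ := ((l0:ℤ):ℝ) + ((l1:ℤ):ℝ) + ((l2:ℤ):ℝ) with hLam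
      set c0 : ℝ := ((l0:ℤ):ℝ) * ((u.1 * ((v0.1:ℤ):ℝ) + u.2 * ((v0.2:ℤ):ℝ)) + 1) / Λ with hc0
      set c1 : ℝ := ((l1:ℤ):ℝ) * ((u.1 * ((v1.1:ℤ):ℝ) + u.2 * ((v1.2:ℤ):ℝ)) + 1) / Λ with hc1
      set c2 : ℝ := ((l2:ℤ):ℝ) * ((u.1 * ((v2.1:ℤ):ℝ) + u.2 * ((v2.2:ℤ):ℝ)) + 1) / Λ with hc2
      have hc0n : 0 ≤ c0 := by
        rw [hc0]; apply div_nonneg _ hLpos.le; nlinarith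
      have hc1n : 0 ≤ c1 := by
        rw [hc1]; apply div_nonneg _ hLpos.le; nlinarith
      have hc2n : 0 ≤ c2 := by
        rw [hc2]; apply div_nonneg _ hLpos.le; nlinarith
      have hsum1 : c0 + c1 + c2 = 1 := by
        rw [hc0, hc1, hc2]; field_simp
        linear_combination u.1 * Re1 + u.2 * Re2
      have hLkne : Λ * kR ≠ 0 := mul_ne_zero hLpos.ne' hkR
      have t0 : c0 * u0.1 = ((u.1 * ((v0.1:ℤ):ℝ) + u.2 * ((v0.2:ℤ):ℝ) + 1) *
          (((v1.2:ℤ):ℝ) - ((v2.2:ℤ):ℝ))) / (Λ * kR) := by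
        rw [hc0, hu0]; field_simp
      have t1 : c1 * u1.1 = ((u.1 * ((v1.1:ℤ):ℝ) + u.2 * ((v1.2:ℤ):ℝ) + 1) *
          (((v2.2:ℤ):ℝ) - ((v0.2:ℤ):ℝ))) / (Λ * kR) := by
        rw [hc1, hu1]; field_simp
      have t2 : c2 * u2.1 = ((u.1 * ((v2.1:ℤ):ℝ) + u.2 * ((v2.2:ℤ):ℝ) + 1) *
          (((v0.2:ℤ):ℝ) - ((v1.2:ℤ):ℝ))) / (Λ * kR) := by
        rw [hc2, hu2]; field_simp
      have s0 : c0 * u0.2 = ((u.1 * ((v0.1:ℤ):ℝ) + u.2 * ((v0.2:ℤ):ℝ) + 1) *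
          (((v2.1:ℤ):ℝ) - ((v1.1:ℤ):ℝ))) / (Λ * kR) := by
        rw [hc0, hu0]; field_simp
      have s1 : c1 * u1.2 = ((u.1 * ((v1.1:ℤ):ℝ) + u.2 * ((v1.2:ℤ):ℝ) + 1) *
          (((v0.1:ℤ):ℝ) - ((v2.1:ℤ):ℝ))) / (Λ * kR) := by
        rw [hc1, hu1]; field_simp
      have s2 : c2 * u2.2 = ((u.1 * ((v2.1:ℤ):ℝ) + u.2 * ((v2.2:ℤ):ℝ) + 1) *
          (((v1.1:ℤ):ℝ) - ((v0.1:ℤ):ℝ))) / (Λ * kR) := by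
        rw [hc2, hu2]; field_simp
      have hfst : c0 * u0.1 + c1 * u1.1 + c2 * u2.1 = u.1 := by
        rw [t0, t1, t2, ← add_div, ← add_div]
        rw [show (u.1 * ((v0.1:ℤ):ℝ) + u.2 * ((v0.2:ℤ):ℝ) + 1) *
              (((v1.2:ℤ):ℝ) - ((v2.2:ℤ):ℝ)) +
            (u.1 * ((v1.1:ℤ):ℝ) + u.2 * ((v1.2:ℤ):ℝ) + 1) *
              (((v2.2:ℤ):ℝ) - ((v0.2:ℤ):ℝ)) +
            (u.1 * ((v2.1:ℤ):ℝ) + u.2 * ((v2.2:ℤ):ℝ) + 1) *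
              (((v0.2:ℤ):ℝ) - ((v1.2:ℤ):ℝ)) = u.1 * (Λ * kR) from by
          rw [hLam]; linear_combination u.1 * (R01 + R12 + R20)]
        exact mul_div_cancel_right₀ u.1 hLkne
      have hsnd : c0 * u0.2 + c1 * u1.2 + c2 * u2.2 = u.2 := by
        rw [s0, s1, s2, ← add_div, ← add_div]
        rw [show (u.1 * ((v0.1:ℤ):ℝ) + u.2 * ((v0.2:ℤ):ℝ) + 1) *
              (((v2.1:ℤ):ℝ) - ((v1.1:ℤ):ℝ)) +
            (u.1 * ((v1.1:ℤ):ℝ) + u.2 * ((v1.2:ℤ):ℝ) + 1) *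
              (((v0.1:ℤ):ℝ) - ((v2.1:ℤ):ℝ)) +
            (u.1 * ((v2.1:ℤ):ℝ) + u.2 * ((v2.2:ℤ):ℝ) + 1) *
              (((v1.1:ℤ):ℝ) - ((v0.1:ℤ):ℝ)) = u.2 * (Λ * kR) from by
          rw [hLam]; linear_combination u.2 * (R01 + R12 + R20)]
        exact mul_div_cancel_right₀ u.2 hLkne
      have hrepr : c0 • u0 + c1 • u1 + c2 • u2 = u := by
        rw [Prod.ext_iff]
        constructor
        · simpa [Prod.fst_add, Prod.smul_fst, smul_eq_mul] using hfst
        · simpa [Prod.snd_add, Prod.smul_snd, smul_eq_mul] using hsnd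
      rw [← hrepr]
      exact mem_tri' u0 u1 u2 hc0n hc1n hc2n hsum1
    · apply convexHull_min
      · rintro y hy
        simp only [Set.mem_insert_iff, Set.mem_singleton_iff] at hy
        rcases hy with rfl | rfl | rfl
        · exact hu0mem
        · exact hu1mem
        · exact hu2mem
      · exact hconvD
  -- the normalised volume of the dual
  have hDd : P.nvolDual = (((l0:ℤ):ℝ) + ((l1:ℤ):ℝ) + ((l2:ℤ):ℝ))^2 /
      (|kR| * (((l0:ℤ):ℝ) * ((l1:ℤ):ℝ) * ((l2:ℤ):ℝ))) := by
    rw [FanoPolygon.nvolDual, hdual, volume_triangle', ENNReal.toReal_ofReal (by positivity)]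
    have hdd2 : (u1.1 - u0.1) * (u2.2 - u0.2) - (u1.2 - u0.2) * (u2.1 - u0.1)
        = (((l0:ℤ):ℝ) + ((l1:ℤ):ℝ) + ((l2:ℤ):ℝ))^2 /
          (kR * (((l0:ℤ):ℝ) * ((l1:ℤ):ℝ) * ((l2:ℤ):ℝ))) := by
      have q1 : u1.1 - u0.1 = ((((v2.2:ℤ):ℝ) - ((v0.2:ℤ):ℝ)) * ((l0:ℤ):ℝ)
          - (((v1.2:ℤ):ℝ) - ((v2.2:ℤ):ℝ)) * ((l1:ℤ):ℝ)) / (kR * (((l0:ℤ):ℝ) * ((l1:ℤ):ℝ))) := by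
        rw [hu0, hu1]; field_simp
      have q2 : u2.2 - u0.2 = ((((v1.1:ℤ):ℝ) - ((v0.1:ℤ):ℝ)) * ((l0:ℤ):ℝ)
          - (((v2.1:ℤ):ℝ) - ((v1.1:ℤ):ℝ)) * ((l2:ℤ):ℝ)) / (kR * (((l0:ℤ):ℝ) * ((l2:ℤ):ℝ))) := by
        rw [hu0, hu2]; field_simp
      have q3 : u1.2 - u0.2 = ((((v0.1:ℤ):ℝ) - ((v2.1:ℤ):ℝ)) * ((l0:ℤ):ℝ)
          - (((v2.1:ℤ):ℝ) - ((v1.1:ℤ):ℝ)) * ((l1:ℤ):ℝ)) / (kR * (((l0:ℤ):ℝ) * ((l1:ℤ):ℝ))) := by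
        rw [hu0, hu1]; field_simp
      have q4 : u2.1 - u0.1 = ((((v0.2:ℤ):ℝ) - ((v1.2:ℤ):ℝ)) * ((l0:ℤ):ℝ)
          - (((v1.2:ℤ):ℝ) - ((v2.2:ℤ):ℝ)) * ((l2:ℤ):ℝ)) / (kR * (((l0:ℤ):ℝ) * ((l2:ℤ):ℝ))) := by
        rw [hu0, hu2]; field_simp
      rw [q1, q2, q3, q4, div_mul_div_comm, div_mul_div_comm, div_sub_div_same]
      rw [div_eq_div_iff (by positivity) (by positivity)]
      linear_combination (((l0:ℤ):ℝ) * kR * (((l0:ℤ):ℝ) * ((l1:ℤ):ℝ) * ((l2:ℤ):ℝ)) *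
        (((l0:ℤ):ℝ) + ((l1:ℤ):ℝ) + ((l2:ℤ):ℝ))) * (R01 + R12 + R20)
    rw [hdd2, abs_div, abs_mul]
    rw [abs_of_nonneg (by positivity : (0:ℝ) ≤ (((l0:ℤ):ℝ) + ((l1:ℤ):ℝ) + ((l2:ℤ):ℝ))^2),
      abs_of_pos (by positivity : (0:ℝ) < ((l0:ℤ):ℝ) * ((l1:ℤ):ℝ) * ((l2:ℤ):ℝ))]
    ring
  -- conclusion
  rw [hD, hDd]
  have hkabs : (0:ℝ) < |kR| := abs_pos.mpr hkR
  field_simp
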